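/- Let d ≥ 1, α, β > 0, x0 ∈ ℝ^d, λ1, λ2 ≥ 0, and assume: (i) f1, f2 : ℝ^d × ℝ^d → [0,∞) are C² with Hess f1(z,x) ⪰ λ1·I_{2d}, ∇²_x f2(z,x) ⪰ λ2·I_d, and x·∇_x f_i(z,x) ≥ −a_i for constants a_i > 0 (i = 1,2); (ii) ρ̃ is a probability measure on ℝ^d with an L¹ density such that log ρ̃ ∈ C²(ℝ^d) and ∇²_z log ρ̃(z) ⪯ −λ̃·I_d for some λ̃ > 0; (iii) W : ℝ^d → [0,∞) is C², convex, symmetric, with z·∇W(z) ≥ −D and ‖∇W(z)‖ ≤ D(1+‖z‖) for some D > 0; (iv) ∇²_z f1(z,x) ⪯ Λ1·I_d for all (z,x) and sup_{‖x‖≤R} ∫ f2(z,x) dρ̄(z) < ∞ for every R > 0, where ρ̄ is a fixed probability measure on ℝ^d; and (v) αλ̃ > Λ1. Let A be the set of probability measures ρ on ℝ^d with finite second moment and KL(ρ|ρ̃) < ∞. Then the functional G_b(ρ) := inf_{x ∈ ℝ^d} G_c(ρ,x) is bounded above on A: there exists M ∈ ℝ such that G_b(ρ) ≤ M for all ρ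 ∈ A. -/

import Mathlib

open MeasureTheory
open scoped ENNReal RealInnerProductSpace

noncomputable section


/-- 1-D second-order Taylor upper bound. -/
lemma oneD_taylor (g g' g'' : ℝ → ℝ) (h1 : ∀ t, HasDerivAt g (g' t) t)
    (h2 : ∀ t, HasDerivAt g' (g'' t) t) (K : ℝ) (hK : ∀ t, g'' t ≤ K) :
    g 1 ≤ g 0 + g' 0 + K / 2 := by
  have step1 : ∀ t : ℝ, 0 ≤ t → g' t ≤ g' 0 + K * t := by
    intro t ht
    have hq : ∀ s : ℝ, HasDerivAt (fun u => g' 0 + K * u - g' u) (K - g'' s) s := by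
      intro s
      have := (((hasDerivAt_id' s).const_mul K).const_add (g' 0)).sub (h2 s)
      exact this.congr_deriv (by ring)
    have hm : Monotone (fun u => g' 0 + K * u - g' u) := by
      apply monotone_of_deriv_nonneg
      · exact fun s => (hq s).differentiableAt
      · intro s; rw [(hq s).deriv]; linarith [hK s]
    have := hm ht
    simp only [mul_zero, add_zero] at this
    linarith
  have hQ : ∀ s : ℝ, HasDerivAt (fun u => g 0 + g' 0 * u + K * u ^ 2 / 2 - g u)
      (g' 0 + K * s - g' s) s := by
    intro s
    have hsq : HasDerivAt (fun u : ℝ => K * u ^ 2 / 2) (K * s) s := by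
      have : HasDerivAt (fun u : ℝ => u ^ 2) (2 * s) s := by
        simpa using (hasDerivAt_pow 2 s)
      have := (this.const_mul K).div_const 2
      exact this.congr_deriv (by ring)
    have := ((((hasDerivAt_id' s).const_mul (g' 0)).const_add (g 0)).add hsq).sub (h1 s)
    exact this.congr_deriv (by ring)
  have hmono : MonotoneOn (fun u => g 0 + g' 0 * u + K * u ^ 2 / 2 - g u) (Set.Ici (0:ℝ)) := by
    apply monotoneOn_of_deriv_nonneg (convex_Ici 0)
    · exact fun s _ => (hQ s).differentiableAt.continuousAt.continuousWithinAt
    · exact fun s _ => (hQ s).differentiableAt.differentiableWithinAt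
    · intro s hs
      rw [interior_Ici] at hs
      rw [(hQ s).deriv]
      have := step1 s (le_of_lt hs)
      linarith
  have h01 := hmono (Set.self_mem_Ici) (by norm_num : (1:ℝ) ∈ Set.Ici (0:ℝ)) zero_le_one
  simp only [mul_zero, add_zero, mul_one] at h01
  nlinarith [h01]

/-- Quadratic upper bound from a Hessian upper bound. -/
lemma quad_upper {d : ℕ} (f : EuclideanSpace ℝ (Fin d) → ℝ) (hf : ContDiff ℝ 2 f) (C : ℝ)
    (hC : ∀ x v, iteratedFDeriv ℝ 2 f x ![v, v] ≤ C * ‖v‖ ^ 2)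
    (z : EuclideanSpace ℝ (Fin d)) :
    f z ≤ f 0 + ‖fderiv ℝ f 0‖ * ‖z‖ + C / 2 * ‖z‖ ^ 2 := by
  have hline : ∀ t : ℝ, HasDerivAt (fun s : ℝ => s • z) z t := by
    intro t
    simpa using (hasDerivAt_id t).smul_const z
  have hfd : Differentiable ℝ f := hf.differentiable (by norm_num)
  have hfd' : Differentiable ℝ (fderiv ℝ f) :=
    (hf.fderiv_right (m := 1) (by norm_num)).differentiable (by norm_num)
  have hg : ∀ t : ℝ, HasDerivAt (fun s : ℝ => f (s • z)) (fderiv ℝ f (t • z) z) t := by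
    intro t
    exact (hfd (t • z)).hasFDerivAt.comp_hasDerivAt t (hline t)
  have hg1 : ∀ t : ℝ, HasDerivAt (fun s : ℝ => fderiv ℝ f (s • z) z)
      (fderiv ℝ (fderiv ℝ f) (t • z) z z) t := by
    intro t
    have hA : HasDerivAt (fun s : ℝ => fderiv ℝ f (s • z))
        (fderiv ℝ (fderiv ℝ f) (t • z) z) t :=
      (hfd' (t • z)).hasFDerivAt.comp_hasDerivAt t (hline t)
    have := hA.clm_apply (hasDerivAt_const t z)
    simpa using this
  have hKb : ∀ t : ℝ, fderiv ℝ (fderiv ℝ f) (t • z) z z ≤ C * ‖z‖ ^ 2 := by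
    intro t
    have h := hC (t • z) z
    rw [iteratedFDeriv_two_apply] at h
    simpa using h
  have := oneD_taylor (fun s : ℝ => f (s • z)) (fun t => fderiv ℝ f (t • z) z)
    (fun t => fderiv ℝ (fderiv ℝ f) (t • z) z z) hg hg1 (C * ‖z‖ ^ 2) hKb
  simp only [one_smul, zero_smul] at this
  have hop : fderiv ℝ f 0 z ≤ ‖fderiv ℝ f 0‖ * ‖z‖ := by
    calc fderiv ℝ f 0 z ≤ ‖fderiv ℝ f 0 z‖ := le_abs_self _
    _ ≤ ‖fderiv ℝ f 0‖ * ‖z‖ := (fderiv ℝ f 0).le_opNorm z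
  nlinarith [this, hop]

/-- The KL divergence integral is bounded below by `-1`. -/
lemma kl_ge_neg_one {X : Type*} [MeasurableSpace X] (μ ν : Measure X)
    [IsProbabilityMeasure μ] [IsProbabilityMeasure ν] (hμν : μ ≪ ν)
    (hint : Integrable (llr μ ν) μ) : (-1 : ℝ) ≤ ∫ z, llr μ ν z ∂μ := by
  have hneg : ∫⁻ z, ENNReal.ofReal (-(llr μ ν z)) ∂μ ≤ 1 := by
    have hle : ∀ᵐ z ∂μ, ENNReal.ofReal (-(llr μ ν z)) ≤ (μ.rnDeriv ν z)⁻¹ := by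
      filter_upwards [Measure.rnDeriv_pos hμν, hμν.ae_le (Measure.rnDeriv_lt_top μ ν)]
        with z h0 htop
      have ht0 : 0 < (μ.rnDeriv ν z).toReal := ENNReal.toReal_pos h0.ne' htop.ne
      have hlog : -(llr μ ν z) ≤ ((μ.rnDeriv ν z).toReal)⁻¹ := by
        rw [llr_def, ← Real.log_inv]
        have := Real.log_le_sub_one_of_pos (inv_pos.mpr ht0)
        linarith
      calc ENNReal.ofReal (-(llr μ ν z)) ≤ ENNReal.ofReal (((μ.rnDeriv ν z).toReal)⁻¹) :=
            ENNReal.ofReal_le_ofReal hlog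
      _ = (μ.rnDeriv ν z)⁻¹ := by
            rw [← ENNReal.toReal_inv, ENNReal.ofReal_toReal (ENNReal.inv_ne_top.mpr h0.ne')]
    calc ∫⁻ z, ENNReal.ofReal (-(llr μ ν z)) ∂μ ≤ ∫⁻ z, (μ.rnDeriv ν z)⁻¹ ∂μ :=
          lintegral_mono_ae hle
    _ = ∫⁻ z, (μ.rnDeriv ν z)⁻¹ ∂(ν.withDensity (μ.rnDeriv ν)) := by
          rw [Measure.withDensity_rnDeriv_eq μ ν hμν]
    _ = ∫⁻ z, (μ.rnDeriv ν z) * (μ.rnDeriv ν z)⁻¹ ∂ν := by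
          rw [lintegral_withDensity_eq_lintegral_mul _ (Measure.measurable_rnDeriv μ ν)
            (g := fun z => (μ.rnDeriv ν z)⁻¹) (Measure.measurable_rnDeriv μ ν).inv]
          rfl
    _ ≤ ∫⁻ _, 1 ∂ν := lintegral_mono fun z => ENNReal.mul_inv_le_one _
    _ = 1 := by simp
  rw [integral_eq_lintegral_pos_part_sub_lintegral_neg_part hint]
  have h2 : (∫⁻ z, ENNReal.ofReal (-(llr μ ν z)) ∂μ).toReal ≤ 1 :=
    ENNReal.toReal_le_of_le_ofReal zero_le_one (by simpa using hneg)
  have h3 : (0:ℝ) ≤ (∫⁻ z, ENNReal.ofReal (llr μ ν z) ∂μ).toReal := ENNReal.toReal_nonneg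
  linarith

/-- Real Gaussian integrability on Euclidean space. -/
lemma integrable_exp_neg_sq {d : ℕ} {b : ℝ} (hb : 0 < b) :
    Integrable (fun z : EuclideanSpace ℝ (Fin d) => Real.exp (-b * ‖z‖ ^ 2)) volume := by
  have h := (GaussianFourier.integrable_cexp_neg_mul_sq_norm_add_of_euclideanSpace
    (b := (b : ℂ)) (by simpa using hb) 0 (0 : EuclideanSpace ℝ (Fin d))).norm
  refine h.congr ?_
  filter_upwards with v
  simp [Complex.norm_exp, ← Complex.ofReal_pow]


/-- The competitive-case energy functional `G_c(ρ, x)`; here the Kullback–Leibler term is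
written with the Radon–Nikodym derivative of `ρ` with respect to the reference measure
`ρ̃`, and `(W∗ρ)(z) = ∫ W(z − z') dρ(z')`. -/
noncomputable def Gc {d : ℕ}
    (f1 f2 : EuclideanSpace ℝ (Fin d) → EuclideanSpace ℝ (Fin d) → ℝ) (W : EuclideanSpace ℝ (Fin d) → ℝ)
    (ρb ρt : Measure (EuclideanSpace ℝ (Fin d))) (α β : ℝ) (x0 : EuclideanSpace ℝ (Fin d))
    (ρ : Measure (EuclideanSpace ℝ (Fin d))) (x : EuclideanSpace ℝ (Fin d)) : ℝ :=
  (∫ z, f1 z x ∂ρ) + (∫ z, f2 z x ∂ρb) + (β / 2) * ‖x - x0‖ ^ 2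
    - α * (∫ z, Real.log ((ρ.rnDeriv ρt z).toReal) ∂ρ)
    - (1 / 2) * (∫ z, (∫ z', W (z - z') ∂ρ) ∂ρ)

/-- The admissible set `A`: probability measures with finite second moment and finite
Kullback–Leibler divergence with respect to `ρ̃` (i.e. `ρ ≪ ρ̃` and the log-likelihood
ratio is `ρ`-integrable). -/
def Aset {d : ℕ} (ρt : Measure (EuclideanSpace ℝ (Fin d))) : Set (Measure (EuclideanSpace ℝ (Fin d))) :=
  {ρ | IsProbabilityMeasure ρ ∧ Integrable (fun z => ‖z‖ ^ 2) ρ ∧ ρ ≪ ρt ∧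
    Integrable (fun z => Real.log ((ρ.rnDeriv ρt z).toReal)) ρ}

/-- boundedness from above of `G_b` on `A`, step (1) in the proof of
Proposition C.9: there is `M ∈ ℝ` with `G_b(ρ) = inf_x G_c(ρ,x) ≤ M` for all `ρ ∈ A`. -/
theorem stmt16 {d : ℕ} (hd : 1 ≤ d) (α β : ℝ) (hα : 0 < α) (hβ : 0 < β)
    (x0 : EuclideanSpace ℝ (Fin d)) (lam1 lam2 : ℝ) (hlam1 : 0 ≤ lam1) (hlam2 : 0 ≤ lam2)
    -- Assumption (i): convexity and growth of `f1`, `f2`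
    (f1 f2 : EuclideanSpace ℝ (Fin d) → EuclideanSpace ℝ (Fin d) → ℝ)
    (hf1nn : ∀ z x, 0 ≤ f1 z x) (hf2nn : ∀ z x, 0 ≤ f2 z x)
    (hf1C : ContDiff ℝ 2 (fun p : EuclideanSpace ℝ (Fin d) × EuclideanSpace ℝ (Fin d) => f1 p.1 p.2))
    (hf2C : ContDiff ℝ 2 (fun p : EuclideanSpace ℝ (Fin d) × EuclideanSpace ℝ (Fin d) => f2 p.1 p.2))
    (hf1hess : ∀ (z x v w : EuclideanSpace ℝ (Fin d)),
      lam1 * (‖v‖ ^ 2 + ‖w‖ ^ 2) ≤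
        iteratedFDeriv ℝ 2 (fun p : EuclideanSpace ℝ (Fin d) × EuclideanSpace ℝ (Fin d) => f1 p.1 p.2) (z, x) ![(v, w), (v, w)])
    (hf2hess : ∀ (z x v : EuclideanSpace ℝ (Fin d)),
      lam2 * ‖v‖ ^ 2 ≤ iteratedFDeriv ℝ 2 (fun x' => f2 z x') x ![v, v])
    (a1 a2 : ℝ) (ha1 : 0 < a1) (ha2 : 0 < a2)
    (hf1a : ∀ z x, -a1 ≤ ⟪x, gradient (fun x' => f1 z x') x⟫)
    (hf2a : ∀ z x, -a2 ≤ ⟪x, gradient (fun x' => f2 z x') x⟫)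
    -- Assumption (ii): shape of the reference distribution `ρ̃`
    (ρtd : EuclideanSpace ℝ (Fin d) → ℝ) (hρtd_pos : ∀ z, 0 < ρtd z)
    (hρtd_int : Integrable ρtd volume) (hρtd_one : ∫ z, ρtd z = 1)
    (hlog : ContDiff ℝ 2 (fun z : EuclideanSpace ℝ (Fin d) => Real.log (ρtd z)))
    (lamt : ℝ) (hlamt : 0 < lamt)
    (hloghess : ∀ z v : EuclideanSpace ℝ (Fin d),
      iteratedFDeriv ℝ 2 (fun z' => Real.log (ρtd z')) z ![v, v] ≤ -lamt * ‖v‖ ^ 2)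
    (ρt : Measure (EuclideanSpace ℝ (Fin d)))
    (hρt : ρt = volume.withDensity (fun z => ENNReal.ofReal (ρtd z)))
    -- Assumption (iii): the interaction kernel `W`
    (W : EuclideanSpace ℝ (Fin d) → ℝ) (hWnn : ∀ z, 0 ≤ W z)
    (hWC : ContDiff ℝ 2 W) (hWconv : ConvexOn ℝ Set.univ W)
    (hWsymm : ∀ z, W (-z) = W z)
    (D : ℝ) (hD : 0 < D)
    (hWD1 : ∀ z, -D ≤ ⟪z, gradient W z⟫)
    (hWD2 : ∀ z, ‖gradient W z‖ ≤ D * (1 + ‖z‖))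
    -- Assumption (iv): upper bounds for `f1` and `f2`
    (Lam1 : ℝ)
    (hf1hess_up : ∀ (z x v : EuclideanSpace ℝ (Fin d)),
      iteratedFDeriv ℝ 2 (fun z' => f1 z' x) z ![v, v] ≤ Lam1 * ‖v‖ ^ 2)
    (ρb : Measure (EuclideanSpace ℝ (Fin d))) [IsProbabilityMeasure ρb]
    (hf2sup : ∀ R : ℝ, 0 < R → ∃ C : ℝ, ∀ x : EuclideanSpace ℝ (Fin d), ‖x‖ ≤ R →
      ∫⁻ z, ENNReal.ofReal (f2 z x) ∂ρb ≤ ENNReal.ofReal C)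
    -- Assumption (v)
    (hcoerc : Lam1 < α * lamt) :
    ∃ M : ℝ, ∀ ρ ∈ Aset ρt, (⨅ x : EuclideanSpace ℝ (Fin d), Gc f1 f2 W ρb ρt α β x0 ρ x) ≤ M := by

  classical
  -- arithmetic setup
  have h2α : (0:ℝ) < 2 * α := by positivity
  have h1 : Lam1 / (2 * α) < lamt / 2 := (div_lt_iff₀ h2α).mpr (by linarith [hcoerc])
  set t0 : ℝ := max (Lam1 / (2 * α)) 0 with ht0
  have ht0nn : 0 ≤ t0 := le_max_right _ _
  have ht0lt : t0 < lamt / 2 := max_lt h1 (by positivity)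
  set c : ℝ := (t0 + lamt / 2) / 2 with hc
  have hcpos : 0 < c := by rw [hc]; linarith
  have hclt : c < lamt / 2 := by rw [hc]; linarith
  have hLc : Lam1 / 2 < α * c := by
    have h2 : Lam1 / (2 * α) < c := by
      rw [hc]; have := le_max_left (Lam1 / (2 * α)) 0; linarith
    have h3 := (div_lt_iff₀ h2α).mp h2
    linarith
  set δ : ℝ := α * c - Lam1 / 2 with hδ
  have hδpos : 0 < δ := by rw [hδ]; linarith
  set a : ℝ := lamt / 2 - c with ha
  have hapos : 0 < a := by rw [ha]; linarith
  -- the reference density is continuous and `ρt` is a probability measure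
  have hρtd_cont : Continuous ρtd := by
    have hrw : ρtd = fun z => Real.exp (Real.log (ρtd z)) := by
      funext z; rw [Real.exp_log (hρtd_pos z)]
    rw [hrw]; exact Real.continuous_exp.comp hlog.continuous
  have hρt_prob : IsProbabilityMeasure ρt := by
    constructor
    rw [hρt, withDensity_apply _ MeasurableSet.univ, setLIntegral_univ,
      ← ofReal_integral_eq_lintegral_ofReal hρtd_int (ae_of_all _ fun z => (hρtd_pos z).le),
      hρtd_one]
    simp
  haveI := hρt_prob
  -- quadratic upper bound on log of the reference density
  set A2 : ℝ := Real.log (ρtd 0) with hA2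
  set N2 : ℝ := ‖fderiv ℝ (fun z : EuclideanSpace ℝ (Fin d) => Real.log (ρtd z)) 0‖ with hN2
  have hlogbd : ∀ z, Real.log (ρtd z) ≤ A2 + N2 * ‖z‖ + (-lamt) / 2 * ‖z‖ ^ 2 :=
    fun z => quad_upper _ hlog (-lamt) hloghess z
  -- integrability of the exponential tilt
  have hexp_int : Integrable (fun z => Real.exp (c * ‖z‖ ^ 2)) ρt := by
    rw [hρt, integrable_withDensity_iff hρtd_cont.measurable.ennreal_ofReal
      (ae_of_all _ fun z => ENNReal.ofReal_lt_top)]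
    have hfun : (fun z : EuclideanSpace ℝ (Fin d) =>
        Real.exp (c * ‖z‖ ^ 2) * (ENNReal.ofReal (ρtd z)).toReal)
        = fun z => Real.exp (c * ‖z‖ ^ 2) * ρtd z := by
      funext z; rw [ENNReal.toReal_ofReal (hρtd_pos z).le]
    rw [hfun]
    have hcont : Continuous (fun z : EuclideanSpace ℝ (Fin d) =>
        Real.exp (c * ‖z‖ ^ 2) * ρtd z) :=
      (Real.continuous_exp.comp (continuous_const.mul (continuous_norm.pow 2))).mul hρtd_cont
    refine Integrable.mono'
      ((integrable_exp_neg_sq (d := d) (b := a / 2) (by linarith)).const_mul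
        (Real.exp (A2 + N2 ^ 2 / (2 * a)))) hcont.aestronglyMeasurable (ae_of_all _ ?_)
    intro z
    have hnn : (0:ℝ) ≤ Real.exp (c * ‖z‖ ^ 2) * ρtd z := mul_nonneg (Real.exp_nonneg _) (hρtd_pos z).le
    rw [Real.norm_of_nonneg hnn]
    have h1' : Real.exp (c * ‖z‖ ^ 2) * ρtd z
        = Real.exp (c * ‖z‖ ^ 2 + Real.log (ρtd z)) := by
      rw [Real.exp_add, Real.exp_log (hρtd_pos z)]
    have hyoung : N2 * ‖z‖ ≤ a / 2 * ‖z‖ ^ 2 + N2 ^ 2 / (2 * a) := by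
      have key : N2 ^ 2 / (2 * a) * (2 * a) = N2 ^ 2 :=
        div_mul_cancel₀ _ (by positivity)
      have h2a : (0:ℝ) < 2 * a := by linarith
      have hgoal : N2 * ‖z‖ * (2 * a) ≤ (a / 2 * ‖z‖ ^ 2 + N2 ^ 2 / (2 * a)) * (2 * a) := by
        have hexp : (a / 2 * ‖z‖ ^ 2 + N2 ^ 2 / (2 * a)) * (2 * a)
            = a ^ 2 * ‖z‖ ^ 2 + N2 ^ 2 / (2 * a) * (2 * a) := by ring
        rw [hexp, key]
        linarith [sq_nonneg (a * ‖z‖ - N2)]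
      exact le_of_mul_le_mul_right hgoal h2a
    have h2' : c * ‖z‖ ^ 2 + Real.log (ρtd z)
        ≤ A2 + N2 ^ 2 / (2 * a) + -(a / 2) * ‖z‖ ^ 2 := by
      have h3' := hlogbd z
      have haa : a = lamt / 2 - c := ha
      have haa2 : a * ‖z‖ ^ 2 = (lamt / 2 - c) * ‖z‖ ^ 2 := by rw [haa]
      linarith [h3', hyoung, haa2]
    rw [h1']
    calc Real.exp (c * ‖z‖ ^ 2 + Real.log (ρtd z))
        ≤ Real.exp (A2 + N2 ^ 2 / (2 * a) + -(a / 2) * ‖z‖ ^ 2) := Real.exp_le_exp.mpr h2'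
      _ = Real.exp (A2 + N2 ^ 2 / (2 * a)) * Real.exp (-(a / 2) * ‖z‖ ^ 2) := by
          rw [← Real.exp_add]
  set Z : ℝ := ∫ z, Real.exp (c * ‖z‖ ^ 2) ∂ρt with hZ
  -- quadratic upper bound for `f1 · x0`
  have hf1x0C : ContDiff ℝ 2 (fun z => f1 z x0) :=
    hf1C.comp (contDiff_id.prodMk contDiff_const)
  set K1 : ℝ := f1 0 x0 with hK1
  set N1 : ℝ := ‖fderiv ℝ (fun z => f1 z x0) 0‖ with hN1
  have hN1nn : 0 ≤ N1 := norm_nonneg _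
  have hf1bd : ∀ z, f1 z x0 ≤ (K1 + N1 ^ 2 / (4 * δ)) + α * c * ‖z‖ ^ 2 := by
    intro z
    have hq := quad_upper _ hf1x0C Lam1 (fun p v => hf1hess_up p x0 v) z
    have key : N1 ^ 2 / (4 * δ) * (4 * δ) = N1 ^ 2 :=
      div_mul_cancel₀ _ (by positivity)
    have h4δ : (0:ℝ) < 4 * δ := by linarith
    have hyoung : N1 * ‖z‖ ≤ δ * ‖z‖ ^ 2 + N1 ^ 2 / (4 * δ) := by
      have hgoal : N1 * ‖z‖ * (4 * δ) ≤ (δ * ‖z‖ ^ 2 + N1 ^ 2 / (4 * δ)) * (4 * δ) := by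
        have hexp : (δ * ‖z‖ ^ 2 + N1 ^ 2 / (4 * δ)) * (4 * δ)
            = 4 * δ ^ 2 * ‖z‖ ^ 2 + N1 ^ 2 / (4 * δ) * (4 * δ) := by ring
        rw [hexp, key]
        linarith [sq_nonneg (2 * δ * ‖z‖ - N1)]
      exact le_of_mul_le_mul_right hgoal h4δ
    have hδ2 : δ * ‖z‖ ^ 2 = (α * c - Lam1 / 2) * ‖z‖ ^ 2 := by rw [hδ]
    linarith [hq, hyoung, hδ2]
  -- bound for the `f2` term
  obtain ⟨C2, hC2⟩ := hf2sup (‖x0‖ + 1) (by positivity)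
  have hT2 : ∫ z, f2 z x0 ∂ρb ≤ max C2 0 := by
    have hmeas : AEStronglyMeasurable (fun z => f2 z x0) ρb :=
      (hf2C.continuous.comp (continuous_id.prodMk continuous_const)).aestronglyMeasurable
    rw [integral_eq_lintegral_of_nonneg_ae (ae_of_all _ fun z => hf2nn z x0) hmeas]
    refine ENNReal.toReal_le_of_le_ofReal (le_max_right _ _) ?_
    exact le_trans (hC2 x0 (by linarith [norm_nonneg x0]))
      (ENNReal.ofReal_le_ofReal (le_max_left _ _))
  -- the final constant
  refine ⟨max ((K1 + N1 ^ 2 / (4 * δ)) + α * Real.log Z + α + max C2 0) 0, ?_⟩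
  rintro ρ ⟨hprob, h2mom, hac, hllr⟩
  haveI := hprob
  have hllr' : Integrable (llr ρ ρt) ρ := hllr
  -- Donsker–Varadhan style bound on the second moment
  set φ : EuclideanSpace ℝ (Fin d) → ℝ := fun z => c * ‖z‖ ^ 2 with hφ
  have hφρ : Integrable φ ρ := h2mom.const_mul c
  haveI : IsProbabilityMeasure (ρt.tilted φ) := isProbabilityMeasure_tilted hexp_int
  have hacT : ρ ≪ ρt.tilted φ := hac.trans (absolutelyContinuous_tilted hexp_int)
  have hDV := integral_llr_tilted_right hac hφρ hexp_int hllr'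
  have hKLT : (-1 : ℝ) ≤ ∫ z, llr ρ (ρt.tilted φ) z ∂ρ :=
    kl_ge_neg_one ρ (ρt.tilted φ) hacT
      (integrable_llr_tilted_right hac hφρ hllr' hexp_int)
  have hmom_bd : ∫ z, φ z ∂ρ ≤ (∫ z, llr ρ ρt z ∂ρ) + Real.log Z + 1 := by
    rw [hDV] at hKLT; linarith
  have hφint : ∫ z, φ z ∂ρ = c * ∫ z, ‖z‖ ^ 2 ∂ρ := by
    rw [hφ]; exact integral_const_mul c _
  -- bound on the `f1` term
  have hT1 : ∫ z, f1 z x0 ∂ρ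
      ≤ (K1 + N1 ^ 2 / (4 * δ)) + α * c * ∫ z, ‖z‖ ^ 2 ∂ρ := by
    have hgint : Integrable (fun z => (K1 + N1 ^ 2 / (4 * δ)) + α * c * ‖z‖ ^ 2) ρ :=
      (integrable_const _).add (h2mom.const_mul _)
    calc ∫ z, f1 z x0 ∂ρ
        ≤ ∫ z, ((K1 + N1 ^ 2 / (4 * δ)) + α * c * ‖z‖ ^ 2) ∂ρ :=
          integral_mono_of_nonneg (ae_of_all _ fun z => hf1nn z x0) hgint
            (ae_of_all _ fun z => hf1bd z)
      _ = (K1 + N1 ^ 2 / (4 * δ)) + α * c * ∫ z, ‖z‖ ^ 2 ∂ρ := by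
          rw [integral_add (integrable_const _) (h2mom.const_mul _), integral_const,
            integral_const_mul]
          simp
  -- the interaction term is nonnegative
  have hT5 : (0:ℝ) ≤ ∫ z, (∫ z', W (z - z') ∂ρ) ∂ρ :=
    integral_nonneg fun z => integral_nonneg fun z' => hWnn _
  -- conclude
  have hmain : Gc f1 f2 W ρb ρt α β x0 ρ x0
      ≤ (K1 + N1 ^ 2 / (4 * δ)) + α * Real.log Z + α + max C2 0 := by
    have hKLint : (∫ z, Real.log ((ρ.rnDeriv ρt z).toReal) ∂ρ) = ∫ z, llr ρ ρt z ∂ρ := rfl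
    have hx0 : (β / 2) * ‖x0 - x0‖ ^ 2 = 0 := by simp
    have hαmom : α * c * (∫ z, ‖z‖ ^ 2 ∂ρ)
        ≤ α * ((∫ z, llr ρ ρt z ∂ρ) + Real.log Z + 1) := by
      have := mul_le_mul_of_nonneg_left hmom_bd hα.le
      rw [hφint] at this
      linarith [this]
    rw [Gc, hKLint, hx0]
    have hαKL := mul_le_mul_of_nonneg_left (le_refl (∫ z, llr ρ ρt z ∂ρ)) hα.le
    linarith [hT1, hT2, hT5, hαmom]
  by_cases hbdd : BddBelow (Set.range (fun x => Gc f1 f2 W ρb ρt α β x0 ρ x))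
  · calc (⨅ x, Gc f1 f2 W ρb ρt α β x0 ρ x) ≤ Gc f1 f2 W ρb ρt α β x0 ρ x0 :=
        ciInf_le hbdd x0
      _ ≤ (K1 + N1 ^ 2 / (4 * δ)) + α * Real.log Z + α + max C2 0 := hmain
      _ ≤ _ := le_max_left _ _
  · rw [Real.iInf_of_not_bddBelow hbdd]
    exact le_max_right _ _
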